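/- Let R be a Noetherian integral domain and P a nonzero prime ideal of R such that the extended ideal PR[X] of the polynomial ring R[X] is the radical of a single polynomial f in R[X]. Then f is a constant b lying in P and P = rad(Rb) in R. -/
import Mathlib

open Polynomial

/-- The height of an ideal: the infimum of the heights (in the prime spectrum)
of the prime ideals containing it. -/
noncomputable def idealHeight {A : Type*} [CommRing A] (I : Ideal A) : ℕ∞ :=
  ⨅ (P : PrimeSpectrum A) (_ : I ≤ P.asIdeal), Order.height P

/-- An ideal `I` of a commutative ring is a set theoretic complete intersection if there
exist `n` elements, with `n` the height of `I`, such that the radical of `I` equals the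
radical of the ideal they generate. -/
def IsSTCI {A : Type*} [CommRing A] (I : Ideal A) : Prop :=
  ∃ n : ℕ, (n : ℕ∞) = idealHeight I ∧
    ∃ a : Fin n → A, I.radical = (Ideal.span (Set.range a)).radical

/-- Let `R` be a Noetherian domain and `P` a nonzero prime ideal such that `P R[X]` is the
radical of a single polynomial `f`. Then `f` is a constant `b ∈ P` and `P = rad(Rb)`. -/
theorem stmt_14 (R : Type*) [CommRing R] [IsDomain R] [IsNoetherianRing R]
    (P : Ideal R) (hP : P.IsPrime) (hP0 : P ≠ ⊥) (f : R[X])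
    (hf : P.map (Polynomial.C : R →+* R[X]) = (Ideal.span {f}).radical) :
    ∃ b : R, b ∈ P ∧ f = Polynomial.C b ∧ P = (Ideal.span {b}).radical := by
  have hfP : f ∈ P.map (Polynomial.C : R →+* R[X]) := by
    rw [hf]; exact Ideal.le_radical (Ideal.mem_span_singleton_self f)
  obtain ⟨p, hpP, hp0⟩ := Submodule.exists_mem_ne_zero_of_ne_bot hP0
  have hCp : (C p) ∈ (Ideal.span {f}).radical := by
    rw [← hf]; exact Ideal.mem_map_of_mem _ hpP
  rw [Ideal.mem_radical_iff] at hCp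
  obtain ⟨n, hn⟩ := hCp
  rw [Ideal.mem_span_singleton] at hn
  have hdeg : f.natDegree = 0 := by
    have h1 : (C p) ^ n ≠ 0 := pow_ne_zero _ (by simpa using hp0)
    have := Polynomial.natDegree_le_of_dvd hn h1
    simpa [Polynomial.natDegree_pow] using this
  have hfb : f = C (f.coeff 0) := Polynomial.eq_C_of_natDegree_eq_zero hdeg
  set b := f.coeff 0 with hb
  have hbP : b ∈ P := by
    rw [Ideal.mem_map_C_iff] at hfP
    exact hfP 0
  refine ⟨b, hbP, hfb, ?_⟩
  apply le_antisymm
  · intro x hx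
    have hCx : (C x) ∈ (Ideal.span {f}).radical := by
      rw [← hf]; exact Ideal.mem_map_of_mem _ hx
    rw [Ideal.mem_radical_iff] at hCx
    obtain ⟨m, hm⟩ := hCx
    rw [hfb, Ideal.mem_span_singleton] at hm
    obtain ⟨g, hg⟩ := hm
    rw [Ideal.mem_radical_iff]
    refine ⟨m, ?_⟩
    rw [Ideal.mem_span_singleton]
    refine ⟨g.coeff 0, ?_⟩
    calc x ^ m = (C x ^ m : R[X]).coeff 0 := by
          rw [← Polynomial.C_pow, Polynomial.coeff_C_zero]
      _ = (C b * g).coeff 0 := by rw [hg]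
      _ = b * g.coeff 0 := Polynomial.coeff_C_mul _
  · rw [← hP.radical]
    exact Ideal.radical_mono (by rwa [Ideal.span_le, Set.singleton_subset_iff])
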